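/- Let G = (V,E) be a cactus. Then for every X with ∅ ≠ X ⊊ V and d_E(X) = 2, the two edges crossing X belong to a common circuit of G; conversely, for every two distinct edges e,f lying on a common circuit of G, there exists X with ∅ ≠ X ⊊ V and d_E(X) = 2 such that the edges crossing X are exactly e and f. Hence the minimum cuts of a cactus are in one-to-one correspondence with the pairs of edges lying on a common circuit. -/

import Mathlib

open scoped Classical

/-- The edge `e` has exactly one endpoint in `X`. -/
def CrossesEdge {V E : Type*} (ends : E → Sym2 V) (X : Finset V) (e : E) : Prop :=
  ∃ u v, ends e = s(u, v) ∧ u ∈ X ∧ v ∉ X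

/-- The set of edges with exactly one endpoint in `X`. -/
noncomputable def crossSet {V E : Type*} [Fintype E] (ends : E → Sym2 V)
    (X : Finset V) : Finset E :=
  Finset.univ.filter (CrossesEdge ends X)

/-- The number of edges with exactly one endpoint in `X`. -/
noncomputable def cutDeg {V E : Type*} [Fintype E] (ends : E → Sym2 V)
    (X : Finset V) : ℕ :=
  (crossSet ends X).card

/-- `C` is a circuit of the multigraph: the edge set of a simple cycle. -/
noncomputable def IsCircuit {V E : Type*} (ends : E → Sym2 V) (C : Finset E) : Prop :=
  ∃ (m : ℕ) (hm : 2 ≤ m) (e : Fin m → E) (v : Fin m → V),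
    Function.Injective e ∧ Function.Injective v ∧
    (∀ i : Fin m, ends (e i) = s(v i, v ⟨(i.val + 1) % m, Nat.mod_lt _ (by omega)⟩)) ∧
    C = Finset.image e Finset.univ

section Aux

variable {V E : Type*}

private def Step (ends : E → Sym2 V) (e f : E) (a b : V) : Prop :=
  ∃ g : E, g ≠ e ∧ g ≠ f ∧ ends g = s(a, b)

private lemma Step.symm {ends : E → Sym2 V} {e f : E} : Symmetric (Step ends e f) := by
  rintro a b ⟨g, h1, h2, h3⟩
  exact ⟨g, h1, h2, by rw [h3, Sym2.eq_swap]⟩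

private lemma Step.flip {ends : E → Sym2 V} {e f : E} {a b : V}
    (h : Step ends e f a b) : Step ends f e a b := by
  obtain ⟨g, h1, h2, h3⟩ := h; exact ⟨g, h2, h1, h3⟩

private lemma crossesEdge_iff {ends : E → Sym2 V} {X : Finset V} {g : E} {u w : V}
    (h : ends g = s(u, w)) :
    CrossesEdge ends X g ↔ ((u ∈ X ∧ w ∉ X) ∨ (w ∈ X ∧ u ∉ X)) := by
  constructor
  · rintro ⟨x, y, hxy, hx, hy⟩
    rw [h] at hxy
    rw [Sym2.eq_iff] at hxy
    rcases hxy with ⟨h1, h2⟩ | ⟨h1, h2⟩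
    · exact Or.inl ⟨h1 ▸ hx, h2 ▸ hy⟩
    · exact Or.inr ⟨h2 ▸ hx, h1 ▸ hy⟩
  · rintro (⟨h1, h2⟩ | ⟨h1, h2⟩)
    · exact ⟨u, w, h, h1, h2⟩
    · exact ⟨w, u, by rw [h, Sym2.eq_swap], h1, h2⟩

private lemma reach_path {ends : E → Sym2 V} {e f : E} {a b : V}
    (h : Relation.ReflTransGen (Step ends e f) a b) :
    ∃ (n : ℕ) (p : ℕ → V) (q : ℕ → E), p 0 = a ∧ p n = b ∧
      (∀ k, k < n → ends (q k) = s(p k, p (k+1)) ∧ q k ≠ e ∧ q k ≠ f) ∧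
      (∀ k l, k ≤ n → l ≤ n → p k = p l → k = l) := by
  induction h with
  | refl => exact ⟨0, fun _ => a, fun _ => e, rfl, rfl, by omega,
      fun k l hk hl _ => by omega⟩
  | @tail b c hab hbc ih =>
    obtain ⟨n, p, q, hp0, hpn, hq, hinj⟩ := ih
    obtain ⟨g, hge, hgf, hg⟩ := hbc
    by_cases hex : ∃ k, k ≤ n ∧ p k = c
    · obtain ⟨k, hk, hpk⟩ := hex
      exact ⟨k, p, q, hp0, hpk, fun l hl => hq l (lt_of_lt_of_le hl hk),
        fun k' l' hk' hl' => hinj k' l' (le_trans hk' hk) (le_trans hl' hk)⟩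
    · push_neg at hex
      refine ⟨n+1, fun k => if k = n+1 then c else p k,
        fun k => if k = n then g else q k, by simp [hp0], by simp, ?_, ?_⟩
      · intro k hk
        rcases Nat.lt_or_ge k n with hkn | hkn
        · have h1 : k ≠ n + 1 := by omega
          have h2 : k + 1 ≠ n + 1 := by omega
          have h3 : k ≠ n := by omega
          simpa [h1, h2, h3] using hq k hkn
        · have hk' : k = n := by omega
          subst hk'
          simp [hpn, hg, hge, hgf]
      · intro k l hk hl hpl
        rcases Nat.lt_or_ge k (n+1) with h1 | h1 <;> rcases Nat.lt_or_ge l (n+1) with h2 | h2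
        · have e1 : k ≠ n + 1 := by omega
          have e2 : l ≠ n + 1 := by omega
          simp only [e1, e2, if_neg, if_false] at hpl
          exact hinj k l (by omega) (by omega) (by simpa [e1, e2] using hpl)
        · have e2 : l = n + 1 := by omega
          have e1 : k ≠ n + 1 := by omega
          subst e2
          simp only [e1, if_neg, if_false, if_pos rfl] at hpl
          exact absurd (by simpa [e1] using hpl) (hex k (by omega))
        · have e1 : k = n + 1 := by omega
          have e2 : l ≠ n + 1 := by omega
          subst e1
          simp only [e2, if_pos rfl] at hpl
          exact absurd (by simpa [e2] using hpl.symm) (hex l (by omega))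
        · omega


private lemma path_circuit {ends : E → Sym2 V} {e f : E} (hef : e ≠ f) {a b : V}
    (hab : a ≠ b) (h : Relation.ReflTransGen (Step ends e f) a b)
    (he : ends e = s(b, a)) :
    ∃ C : Finset E, IsCircuit ends C ∧ e ∈ C ∧ f ∉ C := by
  obtain ⟨n, p, q, hp0, hpn, hq, hinj⟩ := reach_path h
  have hn : 1 ≤ n := by
    rcases Nat.eq_zero_or_pos n with h0 | h0
    · exact absurd (by rw [← hp0, ← hpn, h0]) hab
    · exact h0
  set efun : Fin (n+1) → E := fun i => if i.val = n then e else q i.val with hefun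
  set vfun : Fin (n+1) → V := fun i => p i.val with hvfun
  refine ⟨Finset.image efun Finset.univ, ⟨n+1, by omega, efun, vfun, ?_, ?_, ?_, rfl⟩,
    ?_, ?_⟩
  · -- efun injective
    intro i j hij
    have hi2 := i.2
    have hj2 := j.2
    by_cases hi : i.val = n <;> by_cases hj : j.val = n
    · exact Fin.ext (by omega)
    · exact absurd (by simpa [hefun, hi, hj] using hij.symm) (hq j.val (by omega)).2.1
    · exact absurd (by simpa [hefun, hi, hj] using hij) (hq i.val (by omega)).2.1
    · simp only [hefun, hi, hj, if_neg, if_false] at hij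
      have hqi := (hq i.val (by omega)).1
      have hqj := (hq j.val (by omega)).1
      rw [hij, hqj] at hqi
      rw [Sym2.eq_iff] at hqi
      rcases hqi with ⟨h1, h2⟩ | ⟨h1, h2⟩
      · have e1 := hinj _ _ (by omega) (by omega) h1
        exact Fin.ext (by omega)
      · have e1 := hinj _ _ (by omega) (by omega) h1
        have e2 := hinj _ _ (by omega) (by omega) h2
        omega
  · -- vfun injective
    intro i j hij
    exact Fin.ext (hinj _ _ (by omega) (by omega) hij)
  · -- ends condition
    intro i
    have hi2 := i.2
    by_cases hi : i.val = n
    · have hmod : (i.val + 1) % (n+1) = 0 := by rw [hi]; exact Nat.mod_self _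
      have h1 : efun i = e := by simp [hefun, hi]
      have h2 : vfun i = b := by simp [hvfun, hi, hpn]
      have h3 : vfun ⟨(i.val + 1) % (n+1), Nat.mod_lt _ (by omega)⟩ = a := by
        simp [hvfun, hmod, hp0]
      rw [h1, h2, h3, he]
    · have hlt : i.val < n := by omega
      have hmod : (i.val + 1) % (n+1) = i.val + 1 := Nat.mod_eq_of_lt (by omega)
      have h1 : efun i = q i.val := by simp [hefun, hi]
      have h2 : vfun i = p i.val := rfl
      have h3 : vfun ⟨(i.val + 1) % (n+1), Nat.mod_lt _ (by omega)⟩ = p (i.val + 1) := by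
        simp [hvfun, hmod]
      rw [h1, h2, h3, (hq i.val hlt).1]
  · -- e ∈ C
    exact Finset.mem_image.mpr ⟨⟨n, by omega⟩, Finset.mem_univ _, by simp [hefun]⟩
  · -- f ∉ C
    intro hf
    obtain ⟨i, _, hfi⟩ := Finset.mem_image.mp hf
    by_cases hi : i.val = n
    · exact hef (by simpa [hefun, hi] using hfi)
    · exact (hq i.val (by omega)).2.2 (by simpa [hefun, hi] using hfi)

private lemma succ_mod_inj {m : ℕ} (hm : 2 ≤ m) :
    Function.Injective (fun k : Fin m => (⟨(k.val + 1) % m, Nat.mod_lt _ (by omega)⟩ : Fin m)) := by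
  intro a b h
  have ha := a.2
  have hb := b.2
  have h' : (a.val + 1) % m = (b.val + 1) % m := congrArg Fin.val h
  have e1 : (a.val + 1) % m = if a.val + 1 = m then 0 else a.val + 1 := by
    split
    · simp [*]
    · exact Nat.mod_eq_of_lt (by omega)
  have e2 : (b.val + 1) % m = if b.val + 1 = m then 0 else b.val + 1 := by
    split
    · simp [*]
    · exact Nat.mod_eq_of_lt (by omega)
  rw [e1, e2] at h'
  split at h' <;> split at h' <;> exact Fin.ext (by omega)

private lemma even_cross_card {ends : E → Sym2 V} {m : ℕ} (hm : 2 ≤ m)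
    (ec : Fin m → E) (vc : Fin m → V)
    (hends : ∀ k : Fin m, ends (ec k) = s(vc k, vc ⟨(k.val + 1) % m, Nat.mod_lt _ (by omega)⟩))
    (X : Finset V) :
    Even (Finset.univ.filter (fun k : Fin m => CrossesEdge ends X (ec k))).card := by
  set σ : Fin m → Fin m := fun k => (⟨(k.val + 1) % m, Nat.mod_lt _ (by omega)⟩ : Fin m) with hσ
  have hbij : Function.Bijective σ := Finite.injective_iff_bijective.mp (succ_mod_inj hm)
  set χ : Fin m → ZMod 2 := fun k => if vc k ∈ X then 1 else 0 with hχ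
  rw [← ZMod.natCast_eq_zero_iff_even]
  rw [Finset.card_filter]
  rw [Nat.cast_sum]
  have hterm : ∀ k : Fin m,
      ((if CrossesEdge ends X (ec k) then 1 else 0 : ℕ) : ZMod 2) = χ k + χ (σ k) := by
    intro k
    rw [crossesEdge_iff (hends k)]
    by_cases h1 : vc k ∈ X <;> by_cases h2 : vc (σ k) ∈ X <;>
      simp [hχ, hσ, h1, h2] <;> split_ifs <;> decide
  calc (∑ k : Fin m, ((if CrossesEdge ends X (ec k) then 1 else 0 : ℕ) : ZMod 2))
      = ∑ k : Fin m, (χ k + χ (σ k)) := Finset.sum_congr rfl fun k _ => hterm k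
    _ = (∑ k : Fin m, χ k) + ∑ k : Fin m, χ (σ k) := Finset.sum_add_distrib
    _ = (∑ k : Fin m, χ k) + ∑ k : Fin m, χ k := by
        congr 1
        exact Fintype.sum_bijective σ hbij _ _ (fun k => rfl)
    _ = 0 := by
        rw [← two_mul, show (2 : ZMod 2) = 0 from rfl, zero_mul]

private lemma reach_arc {ends : E → Sym2 V} {m : ℕ} (hm : 2 ≤ m)
    (ec : Fin m → E) (vc : Fin m → V) (hecinj : Function.Injective ec)
    (hends : ∀ k : Fin m, ends (ec k) = s(vc k, vc ⟨(k.val + 1) % m, Nat.mod_lt _ (by omega)⟩))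
    (i j : Fin m) (hij : i ≠ j) :
    Relation.ReflTransGen (Step ends (ec i) (ec j))
      (vc ⟨(i.val + 1) % m, Nat.mod_lt _ (by omega)⟩) (vc j) := by
  have hm0 : 0 < m := by omega
  set a : ℕ := (i.val + 1) % m with ha
  have haltm : a < m := Nat.mod_lt _ hm0
  have hi2 := i.2
  have hj2 := j.2
  -- existence of t with (a + t) % m = j.val
  have hex : ∃ t, (a + t) % m = j.val := by
    rcases le_or_gt a j.val with hle | hlt
    · refine ⟨j.val - a, ?_⟩
      rw [show a + (j.val - a) = j.val by omega]
      exact Nat.mod_eq_of_lt hj2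
    · refine ⟨j.val + m - a, ?_⟩
      rw [show a + (j.val + m - a) = j.val + m by omega, Nat.add_mod_right]
      exact Nat.mod_eq_of_lt hj2
  set d : ℕ := Nat.find hex with hd
  have hdspec : (a + d) % m = j.val := Nat.find_spec hex
  have hdlt : d < m := by
    rcases le_or_gt a j.val with hle | hlt
    · exact lt_of_le_of_lt (Nat.find_min' hex (by
        rw [show a + (j.val - a) = j.val by omega]; exact Nat.mod_eq_of_lt hj2)) (by omega)
    · exact lt_of_le_of_lt (Nat.find_min' hex (by
        rw [show a + (j.val + m - a) = j.val + m by omega, Nat.add_mod_right]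
        exact Nat.mod_eq_of_lt hj2)) (by omega)
  -- avoidance for s < d
  have havoid : ∀ s, s < d → (a + s) % m ≠ i.val ∧ (a + s) % m ≠ j.val := by
    intro s hs
    constructor
    · intro hcon
      have h1 : (a + (s + 1)) % m = a := by
        rw [show a + (s + 1) = (a + s) + 1 by omega, ← Nat.mod_add_mod, hcon, ha]
      have h2 : m ∣ (s + 1) := by
        have hmodeq : (a + (s + 1)) % m = (a + 0) % m := by
          rw [h1, Nat.add_zero]; exact (Nat.mod_eq_of_lt haltm).symm
        have := Nat.ModEq.add_left_cancel' a (hmodeq : Nat.ModEq m (a + (s+1)) (a + 0))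
        exact (Nat.modEq_zero_iff_dvd).mp this
      have := Nat.le_of_dvd (by omega) h2
      omega
    · exact Nat.find_min hex hs
  -- induction along the arc
  have hstep : ∀ t, t ≤ d →
      Relation.ReflTransGen (Step ends (ec i) (ec j))
        (vc ⟨a, haltm⟩) (vc ⟨(a + t) % m, Nat.mod_lt _ hm0⟩) := by
    intro t
    induction t with
    | zero =>
      intro _
      have : (⟨(a + 0) % m, Nat.mod_lt _ hm0⟩ : Fin m) = ⟨a, haltm⟩ := by
        exact Fin.ext (by simp [Nat.mod_eq_of_lt haltm])
      rw [this]
    | succ t ih =>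
      intro ht
      have hih := ih (by omega)
      set k : Fin m := ⟨(a + t) % m, Nat.mod_lt _ hm0⟩ with hk
      have hki : k ≠ i := by
        intro hcon
        exact (havoid t (by omega)).1 (congrArg Fin.val hcon)
      have hkj : k ≠ j := by
        intro hcon
        exact (havoid t (by omega)).2 (congrArg Fin.val hcon)
      have hnext : ((a + t) % m + 1) % m = (a + (t + 1)) % m := by
        rw [Nat.mod_add_mod, show a + t + 1 = a + (t + 1) by omega]
      refine Relation.ReflTransGen.tail hih ⟨ec k, fun h => hki (hecinj h),
        fun h => hkj (hecinj h), ?_⟩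
      have hfin : (⟨(k.val + 1) % m, Nat.mod_lt _ (by omega)⟩ : Fin m) =
          (⟨(a + (t + 1)) % m, Nat.mod_lt _ hm0⟩ : Fin m) := Fin.ext (by exact hnext)
      rw [hends k, hfin]
  have hfinal := hstep d le_rfl
  have : (⟨(a + d) % m, Nat.mod_lt _ hm0⟩ : Fin m) = j := Fin.ext hdspec
  rwa [this] at hfinal
end Aux

/-- In a cactus, the minimum cuts (cuts of value 2) correspond exactly to the pairs of
edges lying on a common circuit: the two edges crossing any cut of value 2 lie on a
common circuit, and conversely for any two distinct edges on a common circuit there is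
a cut of value 2 crossed by exactly these two edges. -/
theorem cactus_minCuts_eq_circuit_pairs {V E : Type*} [Fintype V] [Fintype E]
    (ends : E → Sym2 V) (hloopless : ∀ e : E, ¬ (ends e).IsDiag)
    (hV : 2 ≤ Fintype.card V)
    (h2ec : ∀ X : Finset V, X ≠ ∅ → X ≠ Finset.univ → 2 ≤ cutDeg ends X)
    (hcactus : ∀ e : E, ∃! C : Finset E, IsCircuit ends C ∧ e ∈ C) :
    (∀ X : Finset V, X ≠ ∅ → X ≠ Finset.univ → cutDeg ends X = 2 →
        ∃ C : Finset E, IsCircuit ends C ∧ crossSet ends X ⊆ C) ∧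
      (∀ e f : E, e ≠ f → (∃ C : Finset E, IsCircuit ends C ∧ e ∈ C ∧ f ∈ C) →
        ∃ X : Finset V, X ≠ ∅ ∧ X ≠ Finset.univ ∧ cutDeg ends X = 2 ∧
          crossSet ends X = {e, f}) := by
  constructor
  · -- Part 1
    intro X hX0 hXu hdeg
    have hdeg' : (crossSet ends X).card = 2 := hdeg
    obtain ⟨e1, e2, hne, hpair⟩ := Finset.card_eq_two.mp hdeg'
    obtain ⟨C, ⟨hC, he1C⟩, huniq⟩ := hcactus e1
    refine ⟨C, hC, ?_⟩
    obtain ⟨m, hm, ec, vc, hecinj, hvcinj, hends, hCeq⟩ := id hC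
    have hcross1 : CrossesEdge ends X e1 := by
      have h1 : e1 ∈ crossSet ends X := by rw [hpair]; simp
      simpa [crossSet] using h1
    have heven := even_cross_card hm ec vc hends X
    have hcard : (C.filter (CrossesEdge ends X)).card =
        (Finset.univ.filter fun k => CrossesEdge ends X (ec k)).card := by
      rw [hCeq, Finset.filter_image, Finset.card_image_of_injective _ hecinj]
    have hmem1 : e1 ∈ C.filter (CrossesEdge ends X) :=
      Finset.mem_filter.mpr ⟨he1C, hcross1⟩
    have h2le : 1 < (C.filter (CrossesEdge ends X)).card := by
      have hpos : 0 < (C.filter (CrossesEdge ends X)).card :=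
        Finset.card_pos.mpr ⟨e1, hmem1⟩
      obtain ⟨r, hr⟩ := hcard ▸ heven
      omega
    obtain ⟨g, hg, hgne⟩ := Finset.exists_mem_ne h2le e1
    have hgcross : g ∈ crossSet ends X := by
      simp [crossSet, (Finset.mem_filter.mp hg).2]
    have hge2 : g = e2 := by
      rw [hpair] at hgcross
      rcases Finset.mem_insert.mp hgcross with h | h
      · exact absurd h hgne
      · exact Finset.mem_singleton.mp h
    intro x hx
    rw [hpair] at hx
    rcases Finset.mem_insert.mp hx with h | h
    · exact h ▸ he1C
    · rw [Finset.mem_singleton.mp h, ← hge2]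
      exact (Finset.mem_filter.mp hg).1
  · -- Part 2
    intro e f hef hCex
    obtain ⟨C, hC, heC, hfC⟩ := hCex
    obtain ⟨m, hm, ec, vc, hecinj, hvcinj, hends, hCeq⟩ := id hC
    obtain ⟨i, -, hi⟩ := Finset.mem_image.mp (hCeq ▸ heC)
    obtain ⟨j, -, hj⟩ := Finset.mem_image.mp (hCeq ▸ hfC)
    subst hi hj
    have hij : i ≠ j := fun h => hef (congrArg ec h)
    have hm0 : 0 < m := by omega
    have hi2 := i.2
    have hj2 := j.2
    set inext : Fin m := ⟨(i.val + 1) % m, Nat.mod_lt _ hm0⟩ with hinext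
    set jnext : Fin m := ⟨(j.val + 1) % m, Nat.mod_lt _ hm0⟩ with hjnext
    have hinei : inext ≠ i := by
      intro h
      have hv := congrArg Fin.val h
      simp only [hinext] at hv
      by_cases hc : i.val + 1 = m
      · rw [hc, Nat.mod_self] at hv; omega
      · rw [Nat.mod_eq_of_lt (by omega)] at hv; omega
    have hjnej : jnext ≠ j := by
      intro h
      have hv := congrArg Fin.val h
      simp only [hjnext] at hv
      by_cases hc : j.val + 1 = m
      · rw [hc, Nat.mod_self] at hv; omega
      · rw [Nat.mod_eq_of_lt (by omega)] at hv; omega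
    set R := Relation.ReflTransGen (Step ends (ec i) (ec j)) with hR
    set X : Finset V := Finset.univ.filter (fun w => R (vc inext) w) with hX
    have hmemX : ∀ w, w ∈ X ↔ R (vc inext) w := by
      intro w; simp [hX]
    have hrootX : vc inext ∈ X := (hmemX _).mpr Relation.ReflTransGen.refl
    have hreachj : R (vc inext) (vc j) := reach_arc hm ec vc hecinj hends i j hij
    have hvcjX : vc j ∈ X := (hmemX _).mpr hreachj
    -- vc i ∉ X
    have hviX : vc i ∉ X := by
      intro hcon
      have hreach : R (vc inext) (vc i) := (hmemX _).mp hcon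
      have hne' : vc inext ≠ vc i := fun h => hinei (hvcinj h)
      obtain ⟨C', hC', heC', hfC'⟩ := path_circuit hef hne' hreach (hends i)
      obtain ⟨D, -, hDuniq⟩ := hcactus (ec i)
      have h1 : C = D := hDuniq C ⟨hC, heC⟩
      have h2 : C' = D := hDuniq C' ⟨hC', heC'⟩
      exact hfC' (by rw [h2, ← h1]; exact hfC)
    -- vc jnext ∉ X
    have hvjnX : vc jnext ∉ X := by
      intro hcon
      have hreach1 : R (vc inext) (vc jnext) := (hmemX _).mp hcon
      have hsymR : Symmetric R := by
        haveI : Std.Symm (Step ends (ec i) (ec j)) := ⟨fun x y h => Step.symm h⟩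
        exact fun a b h => Std.Symm.symm a b h
      have hreach2 : R (vc j) (vc jnext) := (hsymR hreachj).trans hreach1
      have hreach2' : Relation.ReflTransGen (Step ends (ec j) (ec i)) (vc j) (vc jnext) :=
        Relation.ReflTransGen.mono (r := Step ends (ec i) (ec j)) (p := Step ends (ec j) (ec i))
          (by intro _ _ h; exact Step.flip h) _ _ hreach2
      have hne' : vc j ≠ vc jnext := fun h => hjnej (hvcinj h.symm)
      obtain ⟨C'', hC'', hfC'', heC''⟩ := path_circuit hef.symm hne' hreach2'
        (by rw [hends j]; exact Sym2.eq_swap)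
      obtain ⟨D, -, hDuniq⟩ := hcactus (ec j)
      have h1 : C = D := hDuniq C ⟨hC, hfC⟩
      have h2 : C'' = D := hDuniq C'' ⟨hC'', hfC''⟩
      exact heC'' (by rw [h2, ← h1]; exact heC)
    -- crossSet X = {ec i, ec j}
    have hsub1 : crossSet ends X ⊆ {ec i, ec j} := by
      intro g hg
      have hgcross : CrossesEdge ends X g := by simpa [crossSet] using hg
      obtain ⟨u, w, hg1, hg2, hg3⟩ := hgcross
      by_contra hgnot
      simp only [Finset.mem_insert, Finset.mem_singleton, not_or] at hgnot
      have hstep : Step ends (ec i) (ec j) u w := ⟨g, hgnot.1, hgnot.2, hg1⟩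
      exact hg3 ((hmemX _).mpr (Relation.ReflTransGen.tail ((hmemX _).mp hg2) hstep))
    have hecross : CrossesEdge ends X (ec i) :=
      ⟨vc inext, vc i, by rw [hends i]; exact Sym2.eq_swap, hrootX, hviX⟩
    have hfcross : CrossesEdge ends X (ec j) :=
      ⟨vc j, vc jnext, hends j, hvcjX, hvjnX⟩
    have hcrossEq : crossSet ends X = {ec i, ec j} := by
      apply Finset.Subset.antisymm hsub1
      rw [Finset.insert_subset_iff, Finset.singleton_subset_iff]
      constructor
      · simp [crossSet, hecross]
      · simp [crossSet, hfcross]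
    refine ⟨X, Finset.ne_empty_of_mem hrootX,
      fun h => hviX (h.symm ▸ Finset.mem_univ (vc i)), ?_, hcrossEq⟩
    have : cutDeg ends X = (crossSet ends X).card := rfl
    rw [this, hcrossEq]
    exact Finset.card_pair hef
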